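/- arXiv:1807.08130 — 5 statements merged into one kernel-verified Lean document; each statement's English description precedes it below -/
import Mathlib

section
/- The function V̄ is a viscosity supersolution of the HJB equation max{1 − V_x, 𝓛[V]} = 0 on 𝒟: for every (s,x,w) ∈ 𝒟 and every C¹ function φ : ℝ³ → ℝ such that V̄ − φ attains over 𝒟 a minimum equal to 0 at (s,x,w), one has 1 − ∂ₓφ(s,x,w) ≤ 0 and 𝓛[V̄,φ](s,x,w) ≤ 0. -/
open MeasureTheory

section helpers
open Filter Set

lemma deriv_le_of_right' {g : ℝ → ℝ} {a d C : ℝ} (hg : HasDerivAt g d a)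
    (h : ∀ᶠ y in nhdsWithin a (Set.Ioi a), g y - g a ≤ C * (y - a)) : d ≤ C := by
  have hs := hasDerivAt_iff_tendsto_slope.mp hg
  have hs' : Tendsto (slope g a) (nhdsWithin a (Set.Ioi a)) (nhds d) :=
    hs.mono_left (nhdsWithin_mono a (fun y hy => ne_of_gt hy))
  refine le_of_tendsto hs' ?_
  filter_upwards [h, self_mem_nhdsWithin] with y hy hy'
  rw [slope_def_field, div_le_iff₀ (by simpa using (sub_pos.mpr (Set.mem_Ioi.mp hy')))]
  linarith

lemma deriv_ge_of_left' {g : ℝ → ℝ} {a d C : ℝ} (hg : HasDerivAt g d a)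
    (h : ∀ᶠ y in nhdsWithin a (Set.Iio a), g y - g a ≤ C * (y - a)) : C ≤ d := by
  have hs := hasDerivAt_iff_tendsto_slope.mp hg
  have hs' : Tendsto (slope g a) (nhdsWithin a (Set.Iio a)) (nhds d) :=
    hs.mono_left (nhdsWithin_mono a (fun y hy => ne_of_lt hy))
  refine ge_of_tendsto hs' ?_
  filter_upwards [h, self_mem_nhdsWithin] with y hy hy'
  rw [slope_def_field, le_div_iff_of_neg (by simpa using (sub_neg.mpr (Set.mem_Iio.mp hy')))]
  linarith

end helpers

/-- The domain `D = {(s,x,w) : 0 ≤ s ≤ T, x ≥ 0, 0 ≤ w ≤ s}`. -/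
def Dset (T : ℝ) : Set (ℝ × ℝ × ℝ) :=
  {q | 0 ≤ q.1 ∧ q.1 ≤ T ∧ 0 ≤ q.2.1 ∧ 0 ≤ q.2.2 ∧ q.2.2 ≤ q.1}

/-- The open domain `𝒟 = {(s,x,w) : 0 < s < T, x > 0, 0 < w < s}`. -/
def Dint (T : ℝ) : Set (ℝ × ℝ × ℝ) :=
  {q | 0 < q.1 ∧ q.1 < T ∧ 0 < q.2.1 ∧ 0 < q.2.2 ∧ q.2.2 < q.1}

/-- Partial derivative in the first (time) variable. -/
noncomputable def pS (φ : ℝ × ℝ × ℝ → ℝ) (q : ℝ × ℝ × ℝ) : ℝ :=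
  deriv (fun t => φ (t, q.2.1, q.2.2)) q.1

/-- Partial derivative in the second (wealth) variable. -/
noncomputable def pX (φ : ℝ × ℝ × ℝ → ℝ) (q : ℝ × ℝ × ℝ) : ℝ :=
  deriv (fun y => φ (q.1, y, q.2.2)) q.2.1

/-- Partial derivative in the third (elapsed-time) variable. -/
noncomputable def pW (φ : ℝ × ℝ × ℝ → ℝ) (q : ℝ × ℝ × ℝ) : ℝ :=
  deriv (fun v => φ (q.1, q.2.1, v)) q.2.2

/-- The first-order integro-differential operator
`𝓛[u,φ](s,x,w) = -c·u + φ_s + p·φ_x + φ_w + λ(w)(∫₀ˣ u(s,x-α,0) dG(α) - u)`,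
the integral being the Lebesgue–Stieltjes integral over `[0,x]`. -/
noncomputable def Lop (c p : ℝ) (lam : ℝ → ℝ) (G : StieltjesFunction ℝ)
    (u φ : ℝ × ℝ × ℝ → ℝ) (q : ℝ × ℝ × ℝ) : ℝ :=
  -c * u q + pS φ q + p * pX φ q + pW φ q +
    lam q.2.2 * ((∫ α in Set.Icc (0 : ℝ) q.2.1, u (q.1, q.2.1 - α, 0) ∂G.measure) - u q)

/-- The distance-like function `d(s,x,w) = min{T - s, w, (√2/2)(s-w), x}`. -/
noncomputable def dD (T : ℝ) (q : ℝ × ℝ × ℝ) : ℝ :=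
  min (T - q.1) (min q.2.2 (min (Real.sqrt 2 / 2 * (q.1 - q.2.2)) q.2.1))

/-- The supersolution candidate `V̄(s,x,w) = x + d(s,x,w) + N₁(T-s)`,
`N₁ = √2/2 + 1 + 2p`. -/
noncomputable def Vbar (T p : ℝ) (q : ℝ × ℝ × ℝ) : ℝ :=
  q.2.1 + dD T q + (Real.sqrt 2 / 2 + 1 + 2 * p) * (T - q.1)

lemma dD_eq (T s x w : ℝ) :
    dD T (s, x, w) = min (T - s) (min w (min (Real.sqrt 2 / 2 * (s - w)) x)) := rfl

lemma Vbar_eq (T p s x w : ℝ) :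
    Vbar T p (s, x, w) = x + dD T (s, x, w) + (Real.sqrt 2 / 2 + 1 + 2 * p) * (T - s) := rfl

lemma dD_dir (T s x w p t : ℝ) (hp : 0 ≤ p) (ht : 0 ≤ t) :
    dD T (s + t, x + p * t, w + t) ≤ dD T (s, x, w) + (1 + p) * t := by
  rw [dD_eq, dD_eq]
  have key : min ((T-s)+(1+p)*t) (min (w+(1+p)*t)
      (min (Real.sqrt 2/2*(s-w)+(1+p)*t) (x+(1+p)*t)))
      = min (T - s) (min w (min (Real.sqrt 2 / 2 * (s - w)) x)) + (1+p)*t := by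
    rw [min_add_add_right, min_add_add_right, min_add_add_right]
  rw [← key]
  refine le_min ?_ (le_min ?_ (le_min ?_ ?_))
  · exact le_trans (min_le_left _ _) (by nlinarith)
  · exact le_trans ((min_le_right _ _).trans (min_le_left _ _)) (by nlinarith)
  · refine le_trans ((min_le_right _ _).trans ((min_le_right _ _).trans (min_le_left _ _))) ?_
    have : Real.sqrt 2 / 2 * (s + t - (w + t)) = Real.sqrt 2 / 2 * (s - w) := by ring
    rw [this]; nlinarith
  · exact le_trans ((min_le_right _ _).trans ((min_le_right _ _).trans (min_le_right _ _)))
      (by nlinarith)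

lemma Vbar_continuous (T p : ℝ) : Continuous (Vbar T p) := by
  have hd : Continuous (dD T) := by
    unfold dD
    fun_prop
  unfold Vbar
  fun_prop

set_option maxHeartbeats 2000000 in
/-- `V̄` is a viscosity supersolution of `max{1 - V_x, 𝓛[V]} = 0` on `𝒟`: whenever a C¹
function `φ` is such that `V̄ - φ` attains over `𝒟` a minimum equal to `0` at
`(s,x,w) ∈ 𝒟`, then `1 - φ_x(s,x,w) ≤ 0` and `𝓛[V̄,φ](s,x,w) ≤ 0`. -/
theorem stmt5 (T c p Λ : ℝ) (hT : 0 < T) (hc : 0 < c) (hp : 0 < p) (hΛ : 0 < Λ)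
    (lam : ℝ → ℝ) (hlamc : ContinuousOn lam (Set.Icc 0 T))
    (hlam : ∀ w ∈ Set.Icc (0 : ℝ) T, 0 < lam w ∧ lam w ≤ Λ)
    (G : StieltjesFunction ℝ) (hGc : Continuous G)
    (hGprob : IsProbabilityMeasure G.measure) (hGsupp : G.measure (Set.Iio 0) = 0)
    (q : ℝ × ℝ × ℝ) (hq : q ∈ Dint T)
    (φ : ℝ × ℝ × ℝ → ℝ) (hφ : ContDiff ℝ 1 φ)
    (htouch : Vbar T p q - φ q = 0)
    (hmin : ∀ r ∈ Dint T, 0 ≤ Vbar T p r - φ r) :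
    1 - pX φ q ≤ 0 ∧ Lop c p lam G (Vbar T p) φ q ≤ 0 := by
  obtain ⟨s, x, w⟩ := q
  obtain ⟨hs0, hsT, hx0, hw0, hws⟩ := hq
  simp only at hs0 hsT hx0 hw0 hws
  have htq : φ (s, x, w) = Vbar T p (s, x, w) := by
    have : Vbar T p (s, x, w) - φ (s, x, w) = 0 := htouch
    linarith
  have hφd : Differentiable ℝ φ := hφ.differentiable one_ne_zero
  set Dφ := fderiv ℝ φ (s, x, w) with hDφ
  have hF : HasFDerivAt φ Dφ (s, x, w) := (hφd _).hasFDerivAt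
  have hsq2 : (0:ℝ) ≤ Real.sqrt 2 := Real.sqrt_nonneg 2
  -- partial derivative identifications
  have hlineX : HasDerivAt (fun y : ℝ => ((s : ℝ), y, w)) ((0:ℝ), (1:ℝ), (0:ℝ)) x :=
    (hasDerivAt_const x s).prodMk ((hasDerivAt_id x).prodMk (hasDerivAt_const x w))
  have hXd : HasDerivAt (fun y => φ (s, y, w)) (Dφ (0, 1, 0)) x :=
    hF.comp_hasDerivAt x hlineX
  have hpX : pX φ (s, x, w) = Dφ (0, 1, 0) := hXd.deriv
  have hlineS : HasDerivAt (fun t : ℝ => ((t : ℝ), x, w)) ((1:ℝ), (0:ℝ), (0:ℝ)) s :=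
    (hasDerivAt_id s).prodMk ((hasDerivAt_const s x).prodMk (hasDerivAt_const s w))
  have hSd : HasDerivAt (fun t => φ (t, x, w)) (Dφ (1, 0, 0)) s :=
    hF.comp_hasDerivAt s hlineS
  have hpS : pS φ (s, x, w) = Dφ (1, 0, 0) := hSd.deriv
  have hlineW : HasDerivAt (fun v : ℝ => ((s : ℝ), x, v)) ((0:ℝ), (0:ℝ), (1:ℝ)) w :=
    (hasDerivAt_const w s).prodMk ((hasDerivAt_const w x).prodMk (hasDerivAt_id w))
  have hWd : HasDerivAt (fun v => φ (s, x, v)) (Dφ (0, 0, 1)) w :=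
    hF.comp_hasDerivAt w hlineW
  have hpW : pW φ (s, x, w) = Dφ (0, 0, 1) := hWd.deriv
  -- first claim : 1 ≤ φ_x
  have h1le : (1 : ℝ) ≤ Dφ (0, 1, 0) := by
    refine deriv_ge_of_left' hXd ?_
    filter_upwards [(eventually_gt_nhds hx0).filter_mono nhdsWithin_le_nhds,
      self_mem_nhdsWithin] with y hy0 hyx
    have hyx' : y < x := hyx
    have hmem : ((s, y, w) : ℝ × ℝ × ℝ) ∈ Dint T := ⟨hs0, hsT, hy0, hw0, hws⟩
    have h2 := hmin _ hmem
    have hVd : Vbar T p (s, y, w) - Vbar T p (s, x, w) ≤ y - x := by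
      rw [Vbar_eq, Vbar_eq, dD_eq, dD_eq]
      have hm : min (T - s) (min w (min (Real.sqrt 2 / 2 * (s - w)) y))
          ≤ min (T - s) (min w (min (Real.sqrt 2 / 2 * (s - w)) x)) :=
        min_le_min le_rfl (min_le_min le_rfl (min_le_min le_rfl hyx'.le))
      linarith
    have : φ (s, y, w) ≤ Vbar T p (s, y, w) := by linarith
    linarith [htq]
  constructor
  · rw [hpX]; linarith
  -- second claim
  have hNnn : (0:ℝ) ≤ (Real.sqrt 2 / 2 + 1 + 2 * p) * (T - s) := by
    apply mul_nonneg <;> nlinarith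
  have hdq0 : 0 ≤ dD T (s, x, w) := by
    rw [dD_eq]
    refine le_min (by linarith) (le_min (by linarith) (le_min (by nlinarith) (by linarith)))
  have hVq0 : 0 ≤ Vbar T p (s, x, w) := by rw [Vbar_eq]; linarith
  -- directional derivative bound
  have hlineE : HasDerivAt (fun t : ℝ => (s + t, x + p * t, w + t)) ((1:ℝ), (p:ℝ), (1:ℝ)) 0 := by
    refine HasDerivAt.prodMk ?_ (HasDerivAt.prodMk ?_ ?_)
    · simpa using (hasDerivAt_id (0:ℝ)).const_add s
    · simpa using (((hasDerivAt_id (0:ℝ)).const_mul p).const_add x)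
    · simpa using (hasDerivAt_id (0:ℝ)).const_add w
  have hF0 : HasFDerivAt φ Dφ ((fun t : ℝ => ((s + t : ℝ), x + p * t, w + t)) 0) := by
    norm_num
    exact hF
  have hEd : HasDerivAt (fun t : ℝ => φ (s + t, x + p * t, w + t)) (Dφ (1, p, 1)) 0 :=
    hF0.comp_hasDerivAt 0 hlineE
  have hm : Dφ (1, p, 1) ≤ -(Real.sqrt 2 / 2) := by
    refine deriv_le_of_right' hEd ?_
    filter_upwards [(eventually_lt_nhds (show (0:ℝ) < T - s by linarith)).filter_mono
      nhdsWithin_le_nhds, self_mem_nhdsWithin] with t htT ht0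
    have ht0' : 0 < t := ht0
    have hpt : 0 < p * t := mul_pos hp ht0'
    have hmem : ((s + t, x + p * t, w + t) : ℝ × ℝ × ℝ) ∈ Dint T :=
      ⟨show (0:ℝ) < s + t by linarith, show s + t < T by linarith,
        show (0:ℝ) < x + p * t by linarith, show (0:ℝ) < w + t by linarith,
        show w + t < s + t by linarith⟩
    have h2 := hmin _ hmem
    have hdd := dD_dir T s x w p t hp.le ht0'.le
    have hVd : Vbar T p (s + t, x + p * t, w + t) - Vbar T p (s, x, w)
        ≤ -(Real.sqrt 2 / 2) * t := by
      rw [Vbar_eq, Vbar_eq]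
      have e1 : (Real.sqrt 2/2+1+2*p)*(T-(s+t))
          = (Real.sqrt 2/2+1+2*p)*(T-s) - Real.sqrt 2/2*t - t - 2*(p*t) := by ring
      have e2 : (1+p)*t = t + p*t := by ring
      have e3 : -(Real.sqrt 2/2)*t = -(Real.sqrt 2/2*t) := by ring
      rw [e1, e3]
      rw [e2] at hdd
      linarith [hdd]
    have hφ0 : φ ((s : ℝ) + 0, x + p * 0, w + 0) = φ (s, x, w) := by norm_num
    rw [hφ0]
    have : φ (s + t, x + p * t, w + t) ≤ Vbar T p (s + t, x + p * t, w + t) := by linarith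
    have e4 : -(Real.sqrt 2 / 2) * (t - 0) = -(Real.sqrt 2 / 2 * t) := by ring
    rw [e4]
    have e5 : -(Real.sqrt 2 / 2) * t = -(Real.sqrt 2 / 2 * t) := by ring
    rw [e5] at hVd
    linarith [htq]
  -- sum of partials
  have hsum : pS φ (s, x, w) + p * pX φ (s, x, w) + pW φ (s, x, w) = Dφ (1, p, 1) := by
    rw [hpS, hpX, hpW]
    have hvec : ((1:ℝ), (p:ℝ), (1:ℝ))
        = ((1:ℝ), (0:ℝ), (0:ℝ)) + p • ((0:ℝ), (1:ℝ), (0:ℝ)) + ((0:ℝ), (0:ℝ), (1:ℝ)) := by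
      simp [Prod.ext_iff]
    rw [hvec, map_add, map_add, Dφ.map_smul, smul_eq_mul]
  -- integral bound
  have hμfin : G.measure (Set.Icc (0:ℝ) x) < ⊤ := measure_lt_top _ _
  set M : ℝ := x + (Real.sqrt 2 / 2 + 1 + 2 * p) * (T - s) with hM
  have hM0 : 0 ≤ M := by rw [hM]; linarith
  have hbound : ∀ α ∈ Set.Icc (0:ℝ) x, ‖Vbar T p (s, x - α, 0)‖ ≤ M := by
    intro α hα
    obtain ⟨hα0, hαx⟩ := hα
    have hd0 : dD T (s, x - α, 0) = 0 := by
      rw [dD_eq]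
      have h1 : (0:ℝ) ≤ min (Real.sqrt 2 / 2 * (s - 0)) (x - α) :=
        le_min (by nlinarith) (by linarith)
      rw [min_eq_left h1]
      exact min_eq_right (by linarith)
    rw [Real.norm_eq_abs, abs_le, Vbar_eq, hd0, hM]
    constructor <;> linarith [hNnn]
  have hcont : ContinuousOn (fun α : ℝ => Vbar T p (s, x - α, 0)) (Set.Icc 0 x) := by
    apply Continuous.continuousOn
    exact (Vbar_continuous T p).comp (by fun_prop)
  have hInorm := norm_setIntegral_le_of_norm_le_const hμfin hbound
  have hμ1 : (G.measure (Set.Icc (0:ℝ) x)).toReal ≤ 1 := by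
    rw [← ENNReal.toReal_one]
    exact ENNReal.toReal_mono ENNReal.one_ne_top prob_le_one
  have hI : (∫ α in Set.Icc (0:ℝ) x, Vbar T p (s, x - α, 0) ∂G.measure) ≤ M := by
    calc (∫ α in Set.Icc (0:ℝ) x, Vbar T p (s, x - α, 0) ∂G.measure)
        ≤ ‖∫ α in Set.Icc (0:ℝ) x, Vbar T p (s, x - α, 0) ∂G.measure‖ := le_abs_self _
      _ ≤ M * (G.measure (Set.Icc (0:ℝ) x)).toReal := hInorm
      _ ≤ M * 1 := mul_le_mul_of_nonneg_left hμ1 hM0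
      _ = M := mul_one M
  have hIV : (∫ α in Set.Icc (0:ℝ) x, Vbar T p (s, x - α, 0) ∂G.measure)
      - Vbar T p (s, x, w) ≤ 0 := by
    rw [Vbar_eq]; rw [hM] at hI; linarith
  have hlamw : 0 < lam w := (hlam w ⟨hw0.le, by linarith⟩).1
  have hLop : Lop c p lam G (Vbar T p) φ (s, x, w)
      = -c * Vbar T p (s, x, w) + pS φ (s, x, w) + p * pX φ (s, x, w) + pW φ (s, x, w)
        + lam w * ((∫ α in Set.Icc (0:ℝ) x, Vbar T p (s, x - α, 0) ∂G.measure)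
          - Vbar T p (s, x, w)) := rfl
  rw [hLop]
  have t1 : -c * Vbar T p (s, x, w) ≤ 0 := by
    have := mul_nonneg hc.le hVq0
    linarith
  have t2 : lam w * ((∫ α in Set.Icc (0:ℝ) x, Vbar T p (s, x - α, 0) ∂G.measure)
      - Vbar T p (s, x, w)) ≤ 0 := mul_nonpos_of_nonneg_of_nonpos hlamw.le hIV
  linarith [hm, hsq2, hsum]
end

section
/- The function V̲ is a constrained viscosity subsolution of the HJB equation max{1 − V_x, 𝓛[V]} = 0 on 𝒟*: V̲(T,y,v) ≤ y whenever 0 ≤ y and 0 ≤ v ≤ T, and for every (s,x,w) ∈ 𝒟* and every C¹ function φ : ℝ³ → ℝ such that V̲ − φ attains over 𝒟* a maximum equal to 0 at (s,x,w), one has 1 − ∂ₓφ(s,x,w) ≥ 0 or 𝓛[V̲,φ](s,x,w) ≥ 0. -/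
open MeasureTheory

/-- The domain `𝒟* = {(s,x,w) : 0 ≤ s < T, x ≥ 0, 0 ≤ w ≤ s}`. -/
def Dstar (T : ℝ) : Set (ℝ × ℝ × ℝ) :=
  {q | 0 ≤ q.1 ∧ q.1 < T ∧ 0 ≤ q.2.1 ∧ 0 ≤ q.2.2 ∧ q.2.2 ≤ q.1}

/-- The subsolution candidate `V̲(s,x,w) = x + d(s,x,w) - N₂(T-s)`,
`N₂ = √2/2 + 1 + (c+Λ)·2T/(2+√2)`. -/
noncomputable def Vlow (T c Λ : ℝ) (q : ℝ × ℝ × ℝ) : ℝ :=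
  q.2.1 + dD T q -
    (Real.sqrt 2 / 2 + 1 + (c + Λ) * (2 * T) / (2 + Real.sqrt 2)) * (T - q.1)

/-- Abbreviation for the constant `N₂`. -/
noncomputable def Ncoef (T c Λ : ℝ) : ℝ :=
  Real.sqrt 2 / 2 + 1 + (c + Λ) * (2 * T) / (2 + Real.sqrt 2)

/-- `V̲` is a constrained viscosity subsolution of `max{1 - V_x, 𝓛[V]} = 0` on `𝒟*`:
`V̲(T,y,v) ≤ y` for `0 ≤ y`, `0 ≤ v ≤ T`, and whenever a C¹ function `φ` is such that
`V̲ - φ` attains over `𝒟*` a maximum equal to `0` at `(s,x,w) ∈ 𝒟*`, then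
`1 - φ_x(s,x,w) ≥ 0` or `𝓛[V̲,φ](s,x,w) ≥ 0`. -/
theorem stmt6 (T c p Λ : ℝ) (hT : 0 < T) (hc : 0 < c) (hp : 0 < p) (hΛ : 0 < Λ)
    (lam : ℝ → ℝ) (hlamc : ContinuousOn lam (Set.Icc 0 T))
    (hlam : ∀ w ∈ Set.Icc (0 : ℝ) T, 0 < lam w ∧ lam w ≤ Λ)
    (G : StieltjesFunction ℝ) (hGc : Continuous G)
    (hGprob : IsProbabilityMeasure G.measure) (hGsupp : G.measure (Set.Iio 0) = 0) :
    (∀ y v : ℝ, 0 ≤ y → 0 ≤ v → v ≤ T → Vlow T c Λ (T, y, v) ≤ y) ∧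
    (∀ q ∈ Dstar T, ∀ φ : ℝ × ℝ × ℝ → ℝ, ContDiff ℝ 1 φ →
      Vlow T c Λ q - φ q = 0 →
      (∀ r ∈ Dstar T, Vlow T c Λ r - φ r ≤ 0) →
      1 - pX φ q ≥ 0 ∨ Lop c p lam G (Vlow T c Λ) φ q ≥ 0) := by
  haveI := hGprob
  have hs2 : (0:ℝ) < Real.sqrt 2 := Real.sqrt_pos.mpr (by norm_num)
  have hs2' : Real.sqrt 2 * Real.sqrt 2 = 2 := Real.mul_self_sqrt (by norm_num)
  constructor
  · intro y v hy hv hvT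
    have h2 : dD T (T, y, v) ≤ T - T := min_le_left _ _
    have h3 : Vlow T c Λ (T, y, v) = y + dD T (T, y, v) - Ncoef T c Λ * (T - T) := rfl
    have h4 : Ncoef T c Λ * (T - T) = 0 := by ring
    linarith
  · rintro ⟨s, x, w⟩ ⟨hs0, hsT, hx0, hw0, hws⟩ φ hφ heq hmax
    dsimp only at hs0 hsT hx0 hw0 hws
    have hVle : ∀ r ∈ Dstar T, Vlow T c Λ r ≤ φ r := fun r hr => by
      have := hmax r hr; linarith
    have hφq : φ (s, x, w) = Vlow T c Λ (s, x, w) := by linarith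
    have hdiff : Differentiable ℝ φ := hφ.differentiable one_ne_zero
    have hN0 : 0 ≤ Ncoef T c Λ := by
      have h1 : 0 ≤ (c + Λ) * (2 * T) / (2 + Real.sqrt 2) :=
        div_nonneg (by nlinarith) (by linarith)
      have h2 : Ncoef T c Λ = Real.sqrt 2 / 2 + 1 + (c + Λ) * (2 * T) / (2 + Real.sqrt 2) := rfl
      nlinarith
    by_cases hcase : x ≤ min (T - s) (min w (Real.sqrt 2 / 2 * (s - w)))
    · -- PDE case: d = x
      right
      have hx1 : x ≤ T - s := le_trans hcase (min_le_left _ _)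
      have hx2 : x ≤ w := le_trans hcase (le_trans (min_le_right _ _) (min_le_left _ _))
      have hx3 : x ≤ Real.sqrt 2 / 2 * (s - w) :=
        le_trans hcase (le_trans (min_le_right _ _) (min_le_right _ _))
      have hdq : dD T (s, x, w) = x := by
        show min (T - s) (min w (min (Real.sqrt 2 / 2 * (s - w)) x)) = x
        rw [min_eq_right hx3, min_eq_right hx2, min_eq_right hx1]
      have hVq : Vlow T c Λ (s, x, w) = 2 * x - Ncoef T c Λ * (T - s) := by
        have h : Vlow T c Λ (s, x, w) = x + dD T (s, x, w) - Ncoef T c Λ * (T - s) := rfl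
        rw [h, hdq]; ring
      -- directional derivative bound
      have hkey : ∀ h : ℝ, 0 < h → h < T - s →
          (p - 1 + Ncoef T c Λ) * h ≤ φ (s + h, x + p * h, w + h) - φ (s, x, w) := by
        intro h h0 hT'
        have hph : 0 < p * h := mul_pos hp h0
        have hmem : ((s + h, x + p * h, w + h) : ℝ × ℝ × ℝ) ∈ Dstar T := by
          refine ⟨?_, ?_, ?_, ?_, ?_⟩ <;> dsimp only <;> linarith
        have hd' : x - h ≤ dD T (s + h, x + p * h, w + h) := by
          show x - h ≤ min (T - (s + h)) (min (w + h)
            (min (Real.sqrt 2 / 2 * ((s + h) - (w + h))) (x + p * h)))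
          refine le_min (by linarith) (le_min (by linarith) (le_min ?_ (by linarith)))
          have : Real.sqrt 2 / 2 * ((s + h) - (w + h)) = Real.sqrt 2 / 2 * (s - w) := by ring
          rw [this]; linarith
        have h1 := hVle _ hmem
        have h2 : Vlow T c Λ (s + h, x + p * h, w + h)
            = (x + p * h) + dD T (s + h, x + p * h, w + h)
              - Ncoef T c Λ * (T - (s + h)) := rfl
        rw [h2] at h1
        have hring : Ncoef T c Λ * (T - (s + h))
            = Ncoef T c Λ * (T - s) - Ncoef T c Λ * h := by ring
        rw [hφq, hVq]
        rw [hring] at h1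
        have hexp : (p - 1 + Ncoef T c Λ) * h
            = p * h - h + Ncoef T c Λ * h := by ring
        linarith
      -- the fderiv
      have hL : HasFDerivAt φ (fderiv ℝ φ (s, x, w)) (s, x, w) :=
        (hdiff (s, x, w)).hasFDerivAt
      have hc3 : HasDerivAt (fun h : ℝ => ((s + h, x + p * h, w + h) : ℝ × ℝ × ℝ))
          (((1 : ℝ), (p : ℝ), (1 : ℝ)) : ℝ × ℝ × ℝ) 0 := by
        refine HasDerivAt.prodMk ?_ (HasDerivAt.prodMk ?_ ?_)
        · simpa using (hasDerivAt_id (0:ℝ)).const_add s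
        · simpa using ((hasDerivAt_id (0:ℝ)).const_mul p).const_add x
        · simpa using (hasDerivAt_id (0:ℝ)).const_add w
      have hc0 : ((s + (0:ℝ), x + p * 0, w + 0) : ℝ × ℝ × ℝ) = (s, x, w) := by norm_num
      have hψ : HasDerivAt (fun h : ℝ => φ (s + h, x + p * h, w + h))
          (fderiv ℝ φ (s, x, w) (1, p, 1)) 0 := by
        rw [← hc0] at hL
        have := hL.comp_hasDerivAt 0 hc3
        rwa [hc0] at this
      have hslope : p - 1 + Ncoef T c Λ ≤ fderiv ℝ φ (s, x, w) (1, p, 1) := by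
        have ht := hasDerivAt_iff_tendsto_slope.mp hψ
        have ht' : Filter.Tendsto (slope (fun h : ℝ => φ (s + h, x + p * h, w + h)) 0)
            (nhdsWithin 0 (Set.Ioi 0)) (nhds (fderiv ℝ φ (s, x, w) (1, p, 1))) :=
          ht.mono_left (nhdsWithin_mono 0 (fun y hy => ne_of_gt hy))
        refine ge_of_tendsto ht' ?_
        have hIoo : Set.Ioo (0:ℝ) (T - s) ∈ nhdsWithin (0:ℝ) (Set.Ioi 0) :=
          Ioo_mem_nhdsGT_of_mem ⟨le_refl (0:ℝ), by linarith⟩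
        filter_upwards [hIoo] with h hh
        obtain ⟨h0, hT'⟩ := hh
        have hk := hkey h h0 hT'
        have hψ0 : φ (s + 0, x + p * 0, w + 0) = φ (s, x, w) := by norm_num
        rw [slope_def_field]
        rw [hψ0, sub_zero]
        rw [le_div_iff₀ h0]
        linarith
      -- relate to pS, pX, pW
      have hpS : pS φ (s, x, w) = fderiv ℝ φ (s, x, w) (1, 0, 0) := by
        have hc : HasDerivAt (fun t : ℝ => ((t, x, w) : ℝ × ℝ × ℝ))
            (((1:ℝ), (0:ℝ), (0:ℝ)) : ℝ × ℝ × ℝ) s :=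
          (hasDerivAt_id s).prodMk ((hasDerivAt_const s x).prodMk (hasDerivAt_const s w))
        exact (hL.comp_hasDerivAt s hc).deriv
      have hpX : pX φ (s, x, w) = fderiv ℝ φ (s, x, w) (0, 1, 0) := by
        have hc : HasDerivAt (fun y : ℝ => ((s, y, w) : ℝ × ℝ × ℝ))
            (((0:ℝ), (1:ℝ), (0:ℝ)) : ℝ × ℝ × ℝ) x :=
          (hasDerivAt_const x s).prodMk ((hasDerivAt_id x).prodMk (hasDerivAt_const x w))
        exact (hL.comp_hasDerivAt x hc).deriv
      have hpW : pW φ (s, x, w) = fderiv ℝ φ (s, x, w) (0, 0, 1) := by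
        have hc : HasDerivAt (fun v : ℝ => ((s, x, v) : ℝ × ℝ × ℝ))
            (((0:ℝ), (0:ℝ), (1:ℝ)) : ℝ × ℝ × ℝ) w :=
          (hasDerivAt_const w s).prodMk ((hasDerivAt_const w x).prodMk (hasDerivAt_id w))
        exact (hL.comp_hasDerivAt w hc).deriv
      have hlin : fderiv ℝ φ (s, x, w) (1, 0, 0) + p * fderiv ℝ φ (s, x, w) (0, 1, 0)
          + fderiv ℝ φ (s, x, w) (0, 0, 1) = fderiv ℝ φ (s, x, w) (1, p, 1) := by
        have hv : ((1:ℝ), (p:ℝ), (1:ℝ)) = ((1:ℝ), (0:ℝ), (0:ℝ)) + p • ((0:ℝ), (1:ℝ), (0:ℝ))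
            + ((0:ℝ), (0:ℝ), (1:ℝ)) := by
          simp [Prod.ext_iff]
        rw [hv, map_add, map_add, _root_.map_smul]
        simp [smul_eq_mul]
      -- integral bound
      have hVcont : Continuous (Vlow T c Λ) := by
        unfold Vlow dD
        fun_prop
      have hcont : Continuous fun α : ℝ => Vlow T c Λ (s, x - α, 0) :=
        hVcont.comp (by fun_prop)
      have hint : IntegrableOn (fun α : ℝ => Vlow T c Λ (s, x - α, 0))
          (Set.Icc 0 x) G.measure := hcont.integrableOn_Icc
      have hconst : IntegrableOn (fun _ : ℝ => -(Ncoef T c Λ * (T - s)))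
          (Set.Icc 0 x) G.measure := (integrableOn_const_iff).mpr (Or.inr (measure_lt_top _ _))
      have hlb : ∀ α ∈ Set.Icc (0:ℝ) x,
          -(Ncoef T c Λ * (T - s)) ≤ Vlow T c Λ (s, x - α, 0) := by
        intro α hα
        obtain ⟨hα0, hαx⟩ := hα
        have hd0 : (0:ℝ) ≤ dD T (s, x - α, 0) := by
          show (0:ℝ) ≤ min (T - s) (min 0 (min (Real.sqrt 2 / 2 * (s - 0)) (x - α)))
          refine le_min (by linarith) (le_min le_rfl (le_min ?_ (by linarith)))
          nlinarith
        have hV : Vlow T c Λ (s, x - α, 0)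
            = (x - α) + dD T (s, x - α, 0) - Ncoef T c Λ * (T - s) := rfl
        rw [hV]
        linarith
      have hmono := setIntegral_mono_on hconst hint measurableSet_Icc hlb
      rw [setIntegral_const] at hmono
      have hm1 : (G.measure (Set.Icc 0 x)).toReal ≤ 1 := by
        have h := prob_le_one (μ := G.measure) (s := Set.Icc 0 x)
        have := ENNReal.toReal_mono (by simp) h
        simpa using this
      have hm0 : (0:ℝ) ≤ (G.measure (Set.Icc 0 x)).toReal := ENNReal.toReal_nonneg
      have hNT : (0:ℝ) ≤ Ncoef T c Λ * (T - s) :=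
        mul_nonneg hN0 (by linarith)
      have hI : -(Ncoef T c Λ * (T - s))
          ≤ ∫ α in Set.Icc (0:ℝ) x, Vlow T c Λ (s, x - α, 0) ∂G.measure := by
        rw [smul_eq_mul, measureReal_def] at hmono
        have h5 := mul_le_mul_of_nonneg_right hm1 hNT
        linarith only [hmono, h5, hNT]
      -- structural bound on x
      have hxT : (2 + Real.sqrt 2) * x ≤ T := by
        have h1 : Real.sqrt 2 * x ≤ Real.sqrt 2 * (Real.sqrt 2 / 2 * (s - w)) :=
          mul_le_mul_of_nonneg_left hx3 hs2.le
        have h2 : Real.sqrt 2 * (Real.sqrt 2 / 2 * (s - w)) = s - w := by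
          linear_combination ((s - w) / 2) * hs2'
        rw [h2] at h1
        linarith only [h1, hx1, hx2]
      have hfrac : 2 * ((c + Λ) * x) ≤ (c + Λ) * (2 * T) / (2 + Real.sqrt 2) := by
        rw [le_div_iff₀ (by linarith : (0:ℝ) < 2 + Real.sqrt 2)]
        have h3 := mul_le_mul_of_nonneg_left hxT (by linarith : (0:ℝ) ≤ c + Λ)
        linarith only [h3]
      -- lambda facts
      obtain ⟨hlam0, hlamΛ⟩ := hlam w ⟨hw0, by linarith⟩
      -- assemble
      show Lop c p lam G (Vlow T c Λ) φ (s, x, w) ≥ 0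
      show -c * Vlow T c Λ (s, x, w) + pS φ (s, x, w) + p * pX φ (s, x, w) + pW φ (s, x, w)
          + lam w * ((∫ α in Set.Icc (0:ℝ) x, Vlow T c Λ (s, x - α, 0) ∂G.measure)
            - Vlow T c Λ (s, x, w)) ≥ 0
      set I := ∫ α in Set.Icc (0:ℝ) x, Vlow T c Λ (s, x - α, 0) ∂G.measure with hIdef
      have hIV : -(2 * x) ≤ I - Vlow T c Λ (s, x, w) := by
        rw [hVq]; linarith
      have hlamterm : -(2 * (Λ * x)) ≤ lam w * (I - Vlow T c Λ (s, x, w)) := by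
        have e1 := mul_le_mul_of_nonneg_left hIV hlam0.le
        have e2 := mul_le_mul_of_nonneg_right hlamΛ hx0
        linarith only [e1, e2]
      have hcV : -c * Vlow T c Λ (s, x, w)
          = -(2 * (c * x)) + c * Ncoef T c Λ * (T - s) := by
        rw [hVq]; ring
      have hcN : (0:ℝ) ≤ c * Ncoef T c Λ * (T - s) :=
        mul_nonneg (mul_nonneg hc.le hN0) (by linarith)
      have hNdef : Ncoef T c Λ
          = Real.sqrt 2 / 2 + 1 + (c + Λ) * (2 * T) / (2 + Real.sqrt 2) := rfl
      have hsum : p - 1 + Ncoef T c Λ ≤ pS φ (s, x, w) + p * pX φ (s, x, w) + pW φ (s, x, w) := by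
        rw [hpS, hpX, hpW, hlin]; exact hslope
      linarith only [hsum, hcV, hcN, hlamterm, hfrac, hNdef, hs2.le, hp.le]
    · -- φ_x = 1 case
      left
      push_neg at hcase
      have hμ0 : 0 ≤ min (T - s) (min w (Real.sqrt 2 / 2 * (s - w))) :=
        le_min (by linarith) (le_min hw0 (by nlinarith))
      have hdy : ∀ y : ℝ, min (T - s) (min w (Real.sqrt 2 / 2 * (s - w))) ≤ y →
          dD T (s, y, w) = min (T - s) (min w (Real.sqrt 2 / 2 * (s - w))) := by
        intro y hy
        show min (T - s) (min w (min (Real.sqrt 2 / 2 * (s - w)) y))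
          = min (T - s) (min w (Real.sqrt 2 / 2 * (s - w)))
        rw [← min_assoc w (Real.sqrt 2 / 2 * (s - w)) y,
          ← min_assoc (T - s) (min w (Real.sqrt 2 / 2 * (s - w))) y]
        exact min_eq_left hy
      have hu : IsLocalMin (fun y => φ (s, y, w) - y) x := by
        have hmem : Set.Ioi (min (T - s) (min w (Real.sqrt 2 / 2 * (s - w)))) ∈ nhds x :=
          isOpen_Ioi.mem_nhds hcase
        filter_upwards [hmem] with y hy
        have hy' : min (T - s) (min w (Real.sqrt 2 / 2 * (s - w))) ≤ y := le_of_lt hy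
        have hyD : ((s, y, w) : ℝ × ℝ × ℝ) ∈ Dstar T := by
          refine ⟨?_, ?_, ?_, ?_, ?_⟩ <;> dsimp only <;> linarith [le_trans hμ0 hy']
        have h1 := hVle _ hyD
        have h2 : Vlow T c Λ (s, y, w) = y + dD T (s, y, w) - Ncoef T c Λ * (T - s) := rfl
        have h3 : Vlow T c Λ (s, x, w) = x + dD T (s, x, w) - Ncoef T c Λ * (T - s) := rfl
        rw [hdy y hy'] at h2
        rw [hdy x hcase.le] at h3
        show φ (s, x, w) - x ≤ φ (s, y, w) - y
        rw [hφq]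
        rw [h2] at h1
        linarith
      have hL : HasFDerivAt φ (fderiv ℝ φ (s, x, w)) (s, x, w) :=
        (hdiff (s, x, w)).hasFDerivAt
      have hsec : HasDerivAt (fun y => φ (s, y, w)) (fderiv ℝ φ (s, x, w) (0, 1, 0)) x := by
        have hc : HasDerivAt (fun y : ℝ => ((s, y, w) : ℝ × ℝ × ℝ))
            (((0:ℝ), (1:ℝ), (0:ℝ)) : ℝ × ℝ × ℝ) x :=
          (hasDerivAt_const x s).prodMk ((hasDerivAt_id x).prodMk (hasDerivAt_const x w))
        exact hL.comp_hasDerivAt x hc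
      have hsub : HasDerivAt (fun y => φ (s, y, w) - y)
          (fderiv ℝ φ (s, x, w) (0, 1, 0) - 1) x := hsec.sub (hasDerivAt_id x)
      have hderiv0 : fderiv ℝ φ (s, x, w) (0, 1, 0) - 1 = 0 := by
        rw [← hsub.deriv]
        exact hu.deriv_eq_zero
      have hpx : pX φ (s, x, w) = fderiv ℝ φ (s, x, w) (0, 1, 0) := hsec.deriv
      rw [ge_iff_le, hpx]
      linarith
end

section
/- Let (s,x,w) ∈ 𝒟 satisfy w = (√2/2)(s − w) and w < min{T − s, x}. Then there exists no C¹ function φ : ℝ³ → ℝ such that V̄ − φ attains a local minimum over 𝒟 at (s,x,w); in particular the set of C¹ test functions touching V̄ from below at such a point over 𝒟 is empty. -/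
/-- At a kink point of `d` where `w = (√2/2)(s-w)` and `w < min{T-s, x}`, there is no
C¹ test function `φ` such that `V̄ - φ` attains a local minimum over `𝒟` at `(s,x,w)`:
the set of C¹ test functions touching `V̄` from below at such a point over `𝒟` is empty. -/
theorem stmt9 (T p : ℝ) (hT : 0 < T) (hp : 0 < p)
    (q : ℝ × ℝ × ℝ) (hq : q ∈ Dint T)
    (hkink : q.2.2 = Real.sqrt 2 / 2 * (q.1 - q.2.2))
    (hlt : q.2.2 < min (T - q.1) q.2.1) :
    ¬ ∃ φ : ℝ × ℝ × ℝ → ℝ, ContDiff ℝ 1 φ ∧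
      ∃ ε > 0, ∀ r ∈ Dint T, dist r q < ε →
        Vbar T p q - φ q ≤ Vbar T p r - φ r := by
  obtain ⟨hs0, hsT, hx0, hw0, hws⟩ := hq
  obtain ⟨hwTs, hwx⟩ := lt_min_iff.mp hlt
  rintro ⟨φ, hφ, ε, hε, hmin⟩
  set s := q.1 with hs
  set x := q.2.1 with hx
  set w := q.2.2 with hw
  set c : ℝ := Real.sqrt 2 / 2 with hc
  have hc0 : 0 < c := by
    have : 0 < Real.sqrt 2 := Real.sqrt_pos.mpr (by norm_num)
    positivity
  have hc1 : c < 1 := by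
    have h2 : Real.sqrt 2 ^ 2 = 2 := Real.sq_sqrt (by norm_num)
    have h3 : Real.sqrt 2 < 2 := by nlinarith [Real.sqrt_nonneg 2]
    rw [hc]; linarith
  set δ : ℝ := min (min (T - s - w) (x - w)) (min (min w (s - w)) ε) with hδdef
  have hδ : 0 < δ := by
    refine lt_min (lt_min (by linarith) (by linarith)) (lt_min (lt_min hw0 (by linarith)) hε)
  have hδ1 : δ ≤ T - s - w := le_trans (min_le_left _ _) (min_le_left _ _)
  have hδ2 : δ ≤ x - w := le_trans (min_le_left _ _) (min_le_right _ _)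
  have hδ3 : δ ≤ w := le_trans (min_le_right _ _) (le_trans (min_le_left _ _) (min_le_left _ _))
  have hδ4 : δ ≤ s - w := le_trans (min_le_right _ _) (le_trans (min_le_left _ _) (min_le_right _ _))
  have hδ5 : δ ≤ ε := le_trans (min_le_right _ _) (min_le_right _ _)
  have hdq : dD T q = w := by
    rw [dD, ← hs, ← hx, ← hw, ← hkink, min_eq_left hwx.le, min_self, min_eq_right hwTs.le]
  -- key inequality
  have hkey : ∀ t : ℝ, |t| < δ → φ (s, x, w + t) - φ q ≤ min t (-(c * t)) := by
    intro t ht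
    obtain ⟨htl, htr⟩ := abs_lt.mp ht
    have hctbound : |c * t| ≤ |t| := by
      rw [abs_mul, abs_of_pos hc0]
      nlinarith [abs_nonneg t]
    obtain ⟨hctl, hctr⟩ := abs_lt.mp (lt_of_le_of_lt hctbound ht)
    set r : ℝ × ℝ × ℝ := (s, x, w + t) with hr
    have hrD : r ∈ Dint T :=
      ⟨hs0, hsT, hx0, show (0:ℝ) < w + t by linarith, show w + t < s by linarith⟩
    have hdist : dist r q < ε := by
      have : dist r q = |t| := by
        have hq' : q = (s, x, w) := by rw [hs, hx, hw]
        rw [hq', hr, Prod.dist_eq, Prod.dist_eq]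
        simp [Prod.dist_eq, Real.dist_eq, abs_nonneg]
      rw [this]; exact lt_of_lt_of_le ht hδ5
    have hkink' : c * (s - (w + t)) = w - c * t := by linear_combination -hkink
    have hdr : dD T r = w + min t (-(c * t)) := by
      rw [dD]
      simp only [hr]
      rw [hkink']
      have h1 : min (w - c * t) x = w - c * t := min_eq_left (by linarith)
      rw [h1]
      have h2 : min (w + t) (w - c * t) ≤ T - s := le_trans (min_le_left _ _) (by linarith)
      rw [min_eq_right h2]
      rcases le_total t (-(c * t)) with h | h
      · rw [min_eq_left (by linarith), min_eq_left h]
      · rw [min_eq_right (by linarith), min_eq_right h]; ring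
    have := hmin r hrD hdist
    have hVq : Vbar T p q = x + w + (c + 1 + 2 * p) * (T - s) := by
      rw [Vbar, hdq, ← hs, ← hx, ← hc]
    have hVr : Vbar T p r = x + (w + min t (-(c * t))) + (c + 1 + 2 * p) * (T - s) := by
      rw [Vbar, hdr]
    rw [hVq, hVr] at this
    have : φ r - φ q ≤ min t (-(c * t)) := by linarith
    simpa [hr] using this
  -- the C¹ function restricted to the w-line
  set ψ : ℝ → ℝ := fun t => φ (s, x, w + t) with hψdef
  have hψ0 : ψ 0 = φ q := by
    have hq' : q = (s, x, w) := by rw [hs, hx, hw]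
    simp [hψdef, hq']
  have hline : HasDerivAt (fun t : ℝ => ((s, x, w + t) : ℝ × ℝ × ℝ)) ((0 : ℝ), (0 : ℝ), (1 : ℝ)) 0 :=
    HasDerivAt.prodMk (hasDerivAt_const (0:ℝ) s) (HasDerivAt.prodMk (hasDerivAt_const (0:ℝ) x) ((hasDerivAt_id (0:ℝ)).const_add w))
  have hφd : HasFDerivAt φ (fderiv ℝ φ (s, x, w + 0)) (s, x, w + 0) :=
    (hφ.differentiable one_ne_zero _).hasFDerivAt
  have hψd : HasDerivAt ψ (fderiv ℝ φ (s, x, w + 0) (0, 0, 1)) 0 :=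
    hφd.comp_hasDerivAt 0 hline
  set D : ℝ := fderiv ℝ φ (s, x, w + 0) (0, 0, 1) with hD
  rw [hasDerivAt_iff_tendsto_slope] at hψd
  have hslope : ∀ t : ℝ, t ≠ 0 → slope ψ 0 t = (ψ t - ψ 0) / t := by
    intro t ht; rw [slope_def_field]; ring_nf
  -- right limit: D ≤ -c
  have hright : D ≤ -c := by
    have h1 : Filter.Tendsto (slope ψ 0) (nhdsWithin 0 (Set.Ioi 0)) (nhds D) :=
      hψd.mono_left (nhdsWithin_mono _ fun y hy => ne_of_gt hy)
    refine le_of_tendsto h1 ?_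
    filter_upwards [Ioo_mem_nhdsGT_of_mem (Set.mem_Ico.mpr ⟨le_refl 0, hδ⟩)] with t ht
    obtain ⟨ht0, htδ⟩ := ht
    rw [hslope t (ne_of_gt ht0)]
    have hb : ψ t - ψ 0 ≤ -(c * t) := by
      have := hkey t (by rw [abs_of_pos ht0]; exact htδ)
      rw [hψ0]
      exact le_trans this (min_le_right _ _)
    rw [div_le_iff₀ ht0]
    linarith
  -- left limit: 1 ≤ D
  have hleft : (1 : ℝ) ≤ D := by
    have h1 : Filter.Tendsto (slope ψ 0) (nhdsWithin 0 (Set.Iio 0)) (nhds D) :=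
      hψd.mono_left (nhdsWithin_mono _ fun y hy => ne_of_lt hy)
    refine ge_of_tendsto h1 ?_
    filter_upwards [Ioo_mem_nhdsLT_of_mem (Set.mem_Ioc.mpr ⟨neg_lt_zero.mpr hδ, le_refl 0⟩)] with t ht
    obtain ⟨htδ, ht0⟩ := ht
    rw [hslope t (ne_of_lt ht0)]
    have hb : ψ t - ψ 0 ≤ t := by
      have := hkey t (by rw [abs_of_neg ht0]; linarith)
      rw [hψ0]
      exact le_trans this (min_le_left _ _)
    rw [le_div_iff_of_neg ht0]
    linarith
  linarith
end

section
/- Let φ : ℝ³ → ℝ be a C¹ function such that V̲ − φ attains over 𝒟* a maximum equal to 0 at the point (0,0,0). Then ∂ₓφ(0,0,0) ≥ 1, (∂ₛφ + ∂_wφ)(0,0,0) ≥ N₂, and consequently 𝓛[V̲, φ](0,0,0) ≥ N₂ + p > 0. -/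
open MeasureTheory Filter Topology

private lemma deriv_ge_aux {f : ℝ → ℝ} {a : ℝ} (hf : HasDerivAt f (deriv f 0) 0)
    (h : ∀ᶠ t in 𝓝[>] (0:ℝ), a * t ≤ f t - f 0) : a ≤ deriv f 0 := by
  have h1 : Tendsto (slope f 0) (𝓝[≠] 0) (𝓝 (deriv f 0)) :=
    hasDerivAt_iff_tendsto_slope.1 hf
  have h2 : Tendsto (slope f 0) (𝓝[>] 0) (𝓝 (deriv f 0)) :=
    h1.mono_left (nhdsWithin_mono _ fun x hx => ne_of_gt hx)
  refine ge_of_tendsto h2 ?_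
  filter_upwards [h, self_mem_nhdsWithin] with t ht ht0
  rw [slope_def_field, sub_zero, le_div_iff₀ ht0]
  linarith [ht]

/-- If `φ` is a C¹ function such that `V̲ - φ` attains over `𝒟*` a maximum equal to `0`
at `(0,0,0)`, then `φ_x(0,0,0) ≥ 1`, `(φ_s + φ_w)(0,0,0) ≥ N₂`, and consequently
`𝓛[V̲,φ](0,0,0) ≥ N₂ + p > 0`. -/
theorem stmt10 (T c p Λ : ℝ) (hT : 0 < T) (hc : 0 < c) (hp : 0 < p) (hΛ : 0 < Λ)
    (lam : ℝ → ℝ) (hlamc : ContinuousOn lam (Set.Icc 0 T))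
    (hlam : ∀ w ∈ Set.Icc (0 : ℝ) T, 0 < lam w ∧ lam w ≤ Λ)
    (G : StieltjesFunction ℝ) (hGc : Continuous G)
    (hGprob : IsProbabilityMeasure G.measure) (hGsupp : G.measure (Set.Iio 0) = 0)
    (φ : ℝ × ℝ × ℝ → ℝ) (hφ : ContDiff ℝ 1 φ)
    (htouch : Vlow T c Λ (0, 0, 0) - φ (0, 0, 0) = 0)
    (hmax : ∀ r ∈ Dstar T, Vlow T c Λ r - φ r ≤ 0) :
    1 ≤ pX φ (0, 0, 0) ∧
    (Real.sqrt 2 / 2 + 1 + (c + Λ) * (2 * T) / (2 + Real.sqrt 2))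
      ≤ pS φ (0, 0, 0) + pW φ (0, 0, 0) ∧
    (Real.sqrt 2 / 2 + 1 + (c + Λ) * (2 * T) / (2 + Real.sqrt 2)) + p
      ≤ Lop c p lam G (Vlow T c Λ) φ (0, 0, 0) ∧
    0 < (Real.sqrt 2 / 2 + 1 + (c + Λ) * (2 * T) / (2 + Real.sqrt 2)) + p := by
  set N : ℝ := Real.sqrt 2 / 2 + 1 + (c + Λ) * (2 * T) / (2 + Real.sqrt 2) with hNdef
  have hs2 : (0:ℝ) ≤ Real.sqrt 2 := Real.sqrt_nonneg 2
  have hden : (0:ℝ) < 2 + Real.sqrt 2 := by linarith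
  have hfrac : 0 ≤ (c + Λ) * (2 * T) / (2 + Real.sqrt 2) :=
    div_nonneg (by nlinarith) hden.le
  have hN : 0 < N := by rw [hNdef]; linarith
  -- values of Vlow
  have hV0 : Vlow T c Λ (0,0,0) = -(N * T) := by
    simp only [Vlow, dD, ← hNdef]
    norm_num [min_eq_right hT.le]
  have hVx : ∀ x : ℝ, 0 ≤ x → Vlow T c Λ (0,x,0) = x - N * T := by
    intro x hx
    simp only [Vlow, dD, ← hNdef]
    norm_num [min_eq_left hx, min_eq_right hT.le]
  have hVd : ∀ t : ℝ, 0 ≤ t → t ≤ T → Vlow T c Λ (t,0,t) = -(N * (T - t)) := by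
    intro t ht htT
    simp only [Vlow, dD, ← hNdef]
    have h1 : min t (min (Real.sqrt 2 / 2 * (t - t)) 0) = 0 := by
      norm_num [min_eq_right ht]
    rw [h1]
    have h2 : min (T - t) 0 = 0 := min_eq_right (by linarith)
    rw [h2]; ring
  have hφ00 : φ (0,0,0) = -(N * T) := by linarith [htouch, hV0.symm.le, hV0.le]
  -- fderiv facts
  set L := fderiv ℝ φ (0,0,0) with hL
  have hdφ : HasFDerivAt φ L (0,0,0) := (hφ.differentiable one_ne_zero (0,0,0)).hasFDerivAt
  have hcS : HasDerivAt (fun t : ℝ => ((t, (0:ℝ), (0:ℝ)) : ℝ × ℝ × ℝ))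
      ((1:ℝ), (0:ℝ), (0:ℝ)) 0 :=
    (hasDerivAt_id 0).prodMk ((hasDerivAt_const 0 (0:ℝ)).prodMk (hasDerivAt_const 0 (0:ℝ)))
  have hcX : HasDerivAt (fun y : ℝ => (((0:ℝ), y, (0:ℝ)) : ℝ × ℝ × ℝ))
      ((0:ℝ), (1:ℝ), (0:ℝ)) 0 :=
    (hasDerivAt_const 0 (0:ℝ)).prodMk ((hasDerivAt_id 0).prodMk (hasDerivAt_const 0 (0:ℝ)))
  have hcW : HasDerivAt (fun v : ℝ => (((0:ℝ), (0:ℝ), v) : ℝ × ℝ × ℝ))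
      ((0:ℝ), (0:ℝ), (1:ℝ)) 0 :=
    (hasDerivAt_const 0 (0:ℝ)).prodMk ((hasDerivAt_const 0 (0:ℝ)).prodMk (hasDerivAt_id 0))
  have hcD : HasDerivAt (fun t : ℝ => ((t, (0:ℝ), t) : ℝ × ℝ × ℝ))
      ((1:ℝ), (0:ℝ), (1:ℝ)) 0 :=
    (hasDerivAt_id 0).prodMk ((hasDerivAt_const 0 (0:ℝ)).prodMk (hasDerivAt_id 0))
  have hS : HasDerivAt (fun t : ℝ => φ (t, 0, 0)) (L ((1:ℝ),(0:ℝ),(0:ℝ))) 0 :=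
    show HasDerivAt (φ ∘ (fun t : ℝ => ((t, (0:ℝ), (0:ℝ)) : ℝ × ℝ × ℝ)))
      (L ((1:ℝ),(0:ℝ),(0:ℝ))) 0 from HasFDerivAt.comp_hasDerivAt_of_eq 0 hdφ hcS rfl
  have hX : HasDerivAt (fun y : ℝ => φ (0, y, 0)) (L ((0:ℝ),(1:ℝ),(0:ℝ))) 0 :=
    show HasDerivAt (φ ∘ (fun y : ℝ => (((0:ℝ), y, (0:ℝ)) : ℝ × ℝ × ℝ)))
      (L ((0:ℝ),(1:ℝ),(0:ℝ))) 0 from HasFDerivAt.comp_hasDerivAt_of_eq 0 hdφ hcX rfl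
  have hW : HasDerivAt (fun v : ℝ => φ (0, 0, v)) (L ((0:ℝ),(0:ℝ),(1:ℝ))) 0 :=
    show HasDerivAt (φ ∘ (fun v : ℝ => (((0:ℝ), (0:ℝ), v) : ℝ × ℝ × ℝ)))
      (L ((0:ℝ),(0:ℝ),(1:ℝ))) 0 from HasFDerivAt.comp_hasDerivAt_of_eq 0 hdφ hcW rfl
  have hDg : HasDerivAt (fun t : ℝ => φ (t, 0, t)) (L ((1:ℝ),(0:ℝ),(1:ℝ))) 0 :=
    show HasDerivAt (φ ∘ (fun t : ℝ => ((t, (0:ℝ), t) : ℝ × ℝ × ℝ)))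
      (L ((1:ℝ),(0:ℝ),(1:ℝ))) 0 from HasFDerivAt.comp_hasDerivAt_of_eq 0 hdφ hcD rfl
  have hpS : pS φ (0,0,0) = L ((1:ℝ),(0:ℝ),(0:ℝ)) := hS.deriv
  have hpX : pX φ (0,0,0) = L ((0:ℝ),(1:ℝ),(0:ℝ)) := hX.deriv
  have hpW : pW φ (0,0,0) = L ((0:ℝ),(0:ℝ),(1:ℝ)) := hW.deriv
  have hsplit : L ((1:ℝ),(0:ℝ),(1:ℝ)) = L ((1:ℝ),(0:ℝ),(0:ℝ)) + L ((0:ℝ),(0:ℝ),(1:ℝ)) := by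
    rw [← L.map_add]; norm_num
  -- the x-direction bound
  have hx1 : 1 ≤ pX φ (0,0,0) := by
    rw [hpX, ← hX.deriv]
    refine deriv_ge_aux (hX.deriv ▸ hX) ?_
    filter_upwards [self_mem_nhdsWithin] with t ht
    have hmem : ((0:ℝ), t, (0:ℝ)) ∈ Dstar T := ⟨le_rfl, hT, le_of_lt ht, le_rfl, le_rfl⟩
    have := hmax _ hmem
    rw [hVx t (le_of_lt ht)] at this
    show 1 * t ≤ φ (0, t, 0) - φ (0, 0, 0)
    rw [hφ00]
    linarith
  -- the diagonal bound
  have hd1 : N ≤ pS φ (0,0,0) + pW φ (0,0,0) := by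
    rw [hpS, hpW, ← hsplit, ← hDg.deriv]
    refine deriv_ge_aux (hDg.deriv ▸ hDg) ?_
    filter_upwards [Ioo_mem_nhdsGT hT] with t ht
    have hmem : ((t:ℝ), (0:ℝ), t) ∈ Dstar T := ⟨ht.1.le, ht.2, le_rfl, ht.1.le, le_rfl⟩
    have := hmax _ hmem
    rw [hVd t ht.1.le ht.2.le] at this
    show N * t ≤ φ (t, 0, t) - φ (0, 0, 0)
    rw [hφ00]
    linarith
  -- the integral vanishes
  have hsingle : G.measure (Set.Icc (0:ℝ) 0) = 0 := by
    rw [Set.Icc_self, G.measure_singleton]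
    have hll : Function.leftLim G 0 = G 0 :=
      leftLim_eq_of_tendsto
        ((hGc.tendsto 0).mono_left nhdsWithin_le_nhds)
    rw [hll]; simp
  have hint : (∫ α in Set.Icc (0:ℝ) (0:ℝ), Vlow T c Λ (0, 0 - α, 0) ∂G.measure) = 0 :=
    setIntegral_measure_zero _ hsingle
  have hlam0 : 0 < lam 0 := (hlam 0 ⟨le_rfl, hT.le⟩).1
  -- Lop bound
  have hLop : N + p ≤ Lop c p lam G (Vlow T c Λ) φ (0,0,0) := by
    have hLe : Lop c p lam G (Vlow T c Λ) φ (0,0,0) =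
        c * (N * T) + pS φ (0,0,0) + p * pX φ (0,0,0) + pW φ (0,0,0)
          + lam 0 * (N * T) := by
      simp only [Lop, hV0, hint]
      ring
    rw [hLe]
    have h1 : 0 ≤ c * (N * T) := by positivity
    have h2 : 0 ≤ lam 0 * (N * T) := by positivity
    nlinarith
  exact ⟨hx1, hd1, hLop, by linarith⟩
end

section
/- Let V : D → ℝ be continuous and a viscosity supersolution of max{1 − V_x, 𝓛[V]} = 0 on 𝒟, let K̃ be a constant with c·K̃ ≥ 1, let θ > 1, and set V^θ = θ·V + (θ−1)·K̃. Then V^θ is a strict viscosity supersolution: for every (s,x,w) ∈ 𝒟 and every C¹ function φ : ℝ³ → ℝ such that V^θ − φ attains over 𝒟 a minimum equal to 0 at (s,x,w), one has max{1 − ∂ₓφ(s,x,w), 𝓛[V^θ,φ](s,x,w)} ≤ −(θ−1). -/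
open MeasureTheory

/-- `v` is a viscosity supersolution of `max{1 - V_x, 𝓛[V]} = 0` on `𝒟`:
`v` is lower semicontinuous on `𝒟`, and whenever a C¹ function `φ` is such that
`v - φ` attains over `𝒟` a minimum equal to `0` at `(s,x,w) ∈ 𝒟`, then
`1 - φ_x ≤ 0` and `𝓛[v,φ] ≤ 0` at `(s,x,w)`. -/
def IsSupersol (T c p : ℝ) (lam : ℝ → ℝ) (G : StieltjesFunction ℝ)
    (v : ℝ × ℝ × ℝ → ℝ) : Prop :=
  LowerSemicontinuousOn v (Dint T) ∧
  (∀ q ∈ Dint T, ∀ φ : ℝ × ℝ × ℝ → ℝ, ContDiff ℝ 1 φ →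
    v q - φ q = 0 → (∀ r ∈ Dint T, 0 ≤ v r - φ r) →
    1 - pX φ q ≤ 0 ∧ Lop c p lam G v φ q ≤ 0)

/-- If `V` is a continuous viscosity supersolution of `max{1 - V_x, 𝓛[V]} = 0` on `𝒟`,
`c·K̃ ≥ 1` and `θ > 1`, then `V^θ = θV + (θ-1)K̃` is a strict viscosity supersolution:
for any C¹ test function `φ` such that `V^θ - φ` attains over `𝒟` a minimum equal to `0`
at `(s,x,w) ∈ 𝒟`, one has `max{1 - φ_x, 𝓛[V^θ,φ]}(s,x,w) ≤ -(θ-1)`. -/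
theorem stmt12 (T c p Λ : ℝ) (hT : 0 < T) (hc : 0 < c) (hp : 0 < p) (hΛ : 0 < Λ)
    (lam : ℝ → ℝ) (hlamc : ContinuousOn lam (Set.Icc 0 T))
    (hlam : ∀ w ∈ Set.Icc (0 : ℝ) T, 0 < lam w ∧ lam w ≤ Λ)
    (G : StieltjesFunction ℝ) (hGc : Continuous G)
    (hGprob : IsProbabilityMeasure G.measure) (hGsupp : G.measure (Set.Iio 0) = 0)
    (V : ℝ × ℝ × ℝ → ℝ) (hVcont : ContinuousOn V (Dset T))
    (hVsuper : IsSupersol T c p lam G V)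
    (K : ℝ) (hK : 1 ≤ c * K) (θ : ℝ) (hθ : 1 < θ)
    (Vθ : ℝ × ℝ × ℝ → ℝ) (hVθ : Vθ = fun q => θ * V q + (θ - 1) * K)
    (q : ℝ × ℝ × ℝ) (hq : q ∈ Dint T)
    (φ : ℝ × ℝ × ℝ → ℝ) (hφ : ContDiff ℝ 1 φ)
    (htouch : Vθ q - φ q = 0)
    (hmin : ∀ r ∈ Dint T, 0 ≤ Vθ r - φ r) :
    max (1 - pX φ q) (Lop c p lam G Vθ φ q) ≤ -(θ - 1) := by
  have hθ0 : (0:ℝ) < θ := by linarith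
  have hK0 : (0:ℝ) < K := by nlinarith
  set ψ : ℝ × ℝ × ℝ → ℝ := fun r => (φ r - (θ - 1) * K) / θ with hψdef
  have hψ : ContDiff ℝ 1 ψ := (hφ.sub contDiff_const).div_const θ
  have htouch' : V q - ψ q = 0 := by
    have h0 : θ * V q + (θ - 1) * K - φ q = 0 := by rw [hVθ] at htouch; exact htouch
    show V q - (φ q - (θ - 1) * K) / θ = 0
    field_simp
    linarith
  have hmin' : ∀ r ∈ Dint T, 0 ≤ V r - ψ r := by
    intro r hr
    have h0 := hmin r hr
    rw [hVθ] at h0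
    simp only at h0
    show 0 ≤ V r - (φ r - (θ - 1) * K) / θ
    have heq : V r - (φ r - (θ - 1) * K) / θ = (θ * V r + (θ - 1) * K - φ r) / θ := by
      field_simp; ring
    rw [heq]
    exact div_nonneg (by linarith) hθ0.le
  obtain ⟨h1, h2⟩ := hVsuper.2 q hq ψ hψ htouch' hmin'
  have hderiv : ∀ g : ℝ → ℝ, deriv (fun t => (g t - (θ - 1) * K) / θ) =
      fun t => deriv g t / θ := by
    intro g
    funext t
    rw [deriv_div_const, deriv_sub_const]
  have hpS : pS ψ q = pS φ q / θ := by
    simp only [pS, hψdef]; rw [hderiv (fun t => φ (t, q.2.1, q.2.2))]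
  have hpX : pX ψ q = pX φ q / θ := by
    simp only [pX, hψdef]; rw [hderiv (fun y => φ (q.1, y, q.2.2))]
  have hpW : pW ψ q = pW φ q / θ := by
    simp only [pW, hψdef]; rw [hderiv (fun v => φ (q.1, q.2.1, v))]
  have hx : 1 - pX φ q ≤ -(θ - 1) := by
    rw [hpX] at h1
    have : θ ≤ pX φ q := by
      rw [sub_nonpos, le_div_iff₀ hθ0, one_mul] at h1
      linarith
    linarith
  obtain ⟨hq1, hq2, hq3, hq4, hq5⟩ := hq
  have hwT : q.2.2 ∈ Set.Icc (0:ℝ) T := ⟨le_of_lt hq4, by linarith⟩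
  have hlamw : 0 < lam q.2.2 := (hlam _ hwT).1
  have hμs1 : (G.measure (Set.Icc (0:ℝ) q.2.1)).toReal ≤ 1 := by
    have h := prob_le_one (μ := G.measure) (s := Set.Icc (0:ℝ) q.2.1)
    have := ENNReal.toReal_mono ENNReal.one_ne_top h
    simpa using this
  have hfc : ContinuousOn (fun α => V (q.1, q.2.1 - α, 0)) (Set.Icc (0:ℝ) q.2.1) := by
    apply hVcont.comp
    · exact (continuous_const.prodMk ((continuous_const.sub continuous_id).prodMk
        continuous_const)).continuousOn
    · intro α hα
      obtain ⟨hα1, hα2⟩ := hα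
      refine ⟨hq1.le, hq2.le, ?_, le_refl 0, hq1.le⟩
      show (0:ℝ) ≤ q.2.1 - α
      linarith
  have hfint : IntegrableOn (fun α => V (q.1, q.2.1 - α, 0)) (Set.Icc (0:ℝ) q.2.1)
      G.measure := hfc.integrableOn_compact isCompact_Icc
  have hint : (∫ α in Set.Icc (0:ℝ) q.2.1, Vθ (q.1, q.2.1 - α, 0) ∂G.measure) =
      θ * (∫ α in Set.Icc (0:ℝ) q.2.1, V (q.1, q.2.1 - α, 0) ∂G.measure) +
        (G.measure (Set.Icc (0:ℝ) q.2.1)).toReal * ((θ - 1) * K) := by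
    rw [hVθ]
    rw [integral_add (hfint.const_mul θ)
      ((integrableOn_const (measure_lt_top G.measure _).ne))]
    rw [integral_const_mul, setIntegral_const]
    simp [smul_eq_mul, measureReal_def]
  have hLop : Lop c p lam G Vθ φ q = θ * Lop c p lam G V ψ q - c * (θ - 1) * K +
      lam q.2.2 * ((θ - 1) * K * ((G.measure (Set.Icc (0:ℝ) q.2.1)).toReal - 1)) := by
    simp only [Lop]
    rw [hint, hpS, hpX, hpW, hVθ]
    simp only
    field_simp
    ring
  have hLle : Lop c p lam G Vθ φ q ≤ -(θ - 1) := by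
    rw [hLop]
    have hθL : θ * Lop c p lam G V ψ q ≤ 0 :=
      mul_nonpos_of_nonneg_of_nonpos hθ0.le h2
    have ht1 : lam q.2.2 * ((θ - 1) * K * ((G.measure (Set.Icc (0:ℝ) q.2.1)).toReal - 1)) ≤ 0 := by
      apply mul_nonpos_of_nonneg_of_nonpos hlamw.le
      exact mul_nonpos_of_nonneg_of_nonpos (mul_nonneg (by linarith) hK0.le) (by linarith)
    nlinarith [mul_nonneg (show (0:ℝ) ≤ θ - 1 by linarith) (show (0:ℝ) ≤ c * K - 1 by linarith)]
  exact max_le hx hLle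
end
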